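/- Let G be a finite group, R a subgroup of G, and P a Sylow p-subgroup of G that is R-conjugate-permutable and satisfies P·R = R·P (as subsets of G). Then P is a normal subgroup of the subgroup P·R. -/

import Mathlib

open scoped Pointwise

section Defs

variable {G : Type*} [Group G]

/-- The conjugate `H^x = x⁻¹ H x` of a subgroup `H` of `G`. -/
def conjS (x : G) (H : Subgroup G) : Subgroup G :=
  H.map (MulAut.conj x⁻¹).toMonoidHom

/-- A subgroup `H` of `G` is `R`-conjugate-permutable (for a subset `R ⊆ G`) if
`H · H^x = H^x · H` as subsets of `G`, for all `x ∈ R`. -/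
def IsRCP (R : Set G) (H : Subgroup G) : Prop :=
  ∀ x ∈ R, (H : Set G) * (conjS x H : Set G) = (conjS x H : Set G) * (H : Set G)

/-- A subgroup `H` of `G` is conjugate-permutable if `H · H^x = H^x · H` for all `x ∈ G`. -/
def IsConjPermutable (H : Subgroup G) : Prop :=
  IsRCP (Set.univ : Set G) H

/-- `N` is a minimal normal subgroup of `G`. -/
def IsMinimalNormal (N : Subgroup G) : Prop :=
  N.Normal ∧ N ≠ ⊥ ∧ ∀ K : Subgroup G, K.Normal → K ≤ N → K = ⊥ ∨ K = N

/-- `H` is an abnormal subgroup of `G`: `x ∈ ⟨H, H^x⟩` for all `x ∈ G`. -/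
def IsAbnormal (H : Subgroup G) : Prop :=
  ∀ x : G, x ∈ H ⊔ conjS x H

/-- `H` is normal in the subgroup `K` of `G`. -/
def IsNormalIn (H K : Subgroup G) : Prop :=
  H ≤ K ∧ ∀ x ∈ K, ∀ h ∈ H, x * h * x⁻¹ ∈ H

/-- `H` is subnormal in the subgroup `K`: there is a chain
`H = H₀ ◁ H₁ ◁ ⋯ ◁ Hₙ = K` with each term normal in the next. -/
def IsSubnormalIn (H K : Subgroup G) : Prop :=
  ∃ (n : ℕ) (s : Fin (n + 1) → Subgroup G),
    s 0 = H ∧ s (Fin.last n) = K ∧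
    ∀ i : Fin n, s i.castSucc ≤ s i.succ ∧
      ∀ x ∈ s i.succ, ∀ h ∈ s i.castSucc, x * h * x⁻¹ ∈ s i.castSucc

/-- `H` is pronormal in the subgroup `K`: for every `x ∈ K`, the subgroups `H` and `H^x`
are conjugate in `⟨H, H^x⟩`. -/
def IsPronormalIn (H K : Subgroup G) : Prop :=
  H ≤ K ∧ ∀ x ∈ K, ∃ k ∈ H ⊔ conjS x H, conjS k H = conjS x H

end Defs

/-- The socle of `G`: the subgroup generated by all minimal normal subgroups of `G`. -/
def socle' (G : Type*) [Group G] : Subgroup G :=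
  sSup {N : Subgroup G | IsMinimalNormal N}

/-- `F̃(G)`: the subgroup of `G` containing the Frattini subgroup `Φ(G)` with
`F̃(G)/Φ(G) = Soc(G/Φ(G))`. -/
def Ftilde (G : Type*) [Group G] : Subgroup G :=
  (socle' (G ⧸ frattini G)).comap (QuotientGroup.mk' (frattini G))

/-- The Fitting subgroup `F(G)`: the largest normal nilpotent subgroup of `G`
(the subgroup generated by all normal nilpotent subgroups). -/
def Fitting (G : Type*) [Group G] : Subgroup G :=
  sSup {N : Subgroup G | N.Normal ∧ Group.IsNilpotent N}

section FittingNormal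

variable {G : Type*} [Group G]

lemma map_conj_eq_self {N : Subgroup G} (hN : N.Normal) (g : G) :
    N.map (MulAut.conj g).toMonoidHom = N := by
  ext x
  simp only [Subgroup.mem_map, MulEquiv.coe_toMonoidHom, MulAut.conj_apply]
  constructor
  · rintro ⟨n, hn, rfl⟩; exact hN.conj_mem n hn g
  · intro hx
    refine ⟨g⁻¹ * x * g, by simpa using hN.conj_mem x hx g⁻¹, by group⟩

instance Fitting_normal (G : Type*) [Group G] : (Fitting G).Normal := by
  constructor
  intro n hn g
  have h1 : (Fitting G).map (MulAut.conj g).toMonoidHom = Fitting G := by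
    unfold Fitting
    rw [sSup_eq_iSup, Subgroup.map_iSup]
    refine iSup_congr fun N => ?_
    rw [Subgroup.map_iSup]
    exact iSup_congr_Prop Iff.rfl fun hN => map_conj_eq_self hN.1 g
  rw [← h1]
  exact Subgroup.mem_map.2 ⟨n, hn, rfl⟩

end FittingNormal

/-- The generalized Fitting subgroup `F*(G)`: the subgroup containing `F(G)` with
`F*(G)/F(G) = Soc(C_G(F(G))·F(G)/F(G))`. -/
def FStar (G : Type*) [Group G] : Subgroup G :=
  Subgroup.comap (QuotientGroup.mk' (Fitting G))
    (Subgroup.map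
      ((Subgroup.centralizer (Fitting G : Set G) ⊔ Fitting G).map
          (QuotientGroup.mk' (Fitting G))).subtype
      (socle' ((Subgroup.centralizer (Fitting G : Set G) ⊔ Fitting G).map
          (QuotientGroup.mk' (Fitting G)))))

/-- A group is supersoluble if it has a normal series all of whose terms are
normal in the whole group and all of whose factors are cyclic; the factor
`s (i+1) / s i` being cyclic is expressed by `s (i+1) ≤ s i ⊔ ⟨g⟩` for some `g`. -/
def IsSupersoluble (G : Type*) [Group G] : Prop :=
  ∃ (n : ℕ) (s : Fin (n + 1) → Subgroup G),
    Monotone s ∧ s 0 = ⊥ ∧ s (Fin.last n) = ⊤ ∧ (∀ i, (s i).Normal) ∧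
    ∀ i : Fin n, ∃ g : G, s i.succ ≤ s i.castSucc ⊔ Subgroup.zpowers g

/-- A group is metanilpotent if it has a normal nilpotent subgroup with
nilpotent quotient. -/
def IsMetanilpotent (G : Type*) [Group G] : Prop :=
  ∃ (N : Subgroup G) (hN : N.Normal),
    Group.IsNilpotent N ∧
      @Group.IsNilpotent (G ⧸ N) (@QuotientGroup.Quotient.group G _ N hN)

section Aux

variable {G : Type*} [Group G]

/-- If `H` and `K` permute, then the coe of `H ⊔ K` is the set product `H * K`. -/
lemma coe_sup_of_mul_comm {H K : Subgroup G}
    (h : (H : Set G) * (K : Set G) = (K : Set G) * (H : Set G)) :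
    ((H ⊔ K : Subgroup G) : Set G) = (H : Set G) * (K : Set G) := by
  let S : Subgroup G :=
    { carrier := (H : Set G) * (K : Set G)
      one_mem' := ⟨1, H.one_mem, 1, K.one_mem, one_mul 1⟩
      mul_mem' := by
        rintro a b ⟨h1, hh1, k1, hk1, rfl⟩ ⟨h2, hh2, k2, hk2, rfl⟩
        have : k1 * h2 ∈ (H : Set G) * (K : Set G) := by
          rw [h]; exact Set.mul_mem_mul hk1 hh2
        obtain ⟨h3, hh3, k3, hk3, heq⟩ := this
        refine ⟨h1 * h3, H.mul_mem hh1 hh3, k3 * k2, K.mul_mem hk3 hk2, ?_⟩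
        show h1 * h3 * (k3 * k2) = h1 * k1 * (h2 * k2)
        have heq' : h3 * k3 = k1 * h2 := heq
        rw [mul_assoc h1 h3, ← mul_assoc h3 k3, heq']; group
      inv_mem' := by
        rintro a ⟨h1, hh1, k1, hk1, rfl⟩
        have : k1⁻¹ * h1⁻¹ ∈ (H : Set G) * (K : Set G) := by
          rw [h]; exact Set.mul_mem_mul (K.inv_mem hk1) (H.inv_mem hh1)
        simpa [mul_inv_rev] using this }
  apply le_antisymm
  · have hle : H ⊔ K ≤ S := by
      apply sup_le
      · intro y hy; exact ⟨y, hy, 1, K.one_mem, mul_one y⟩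
      · intro y hy; exact ⟨1, H.one_mem, y, hy, one_mul y⟩
    exact fun y hy => hle hy
  · rintro y ⟨h1, hh1, k1, hk1, rfl⟩
    exact Subgroup.mul_mem _ (Subgroup.mem_sup_left hh1) (Subgroup.mem_sup_right hk1)

end Aux

theorem sylow_normal_in_product_of_rcp
    {G : Type*} [Group G] [Finite G] (R : Subgroup G) (p : ℕ) (hp : p.Prime)
    (P : Sylow p G)
    (h1 : IsRCP (R : Set G) (P : Subgroup G))
    (h2 : ((P : Subgroup G) : Set G) * (R : Set G) =
      (R : Set G) * ((P : Subgroup G) : Set G)) :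
    IsNormalIn (P : Subgroup G) ((P : Subgroup G) ⊔ R) := by
  haveI hpfact : Fact p.Prime := ⟨hp⟩
  haveI : Finite (Sylow p G) :=
    Finite.of_injective (fun S : Sylow p G => ((S : Subgroup G) : Set G))
      (fun A B h => Sylow.ext (SetLike.coe_injective h))
  refine ⟨le_sup_left, ?_⟩
  intro x hx h hh
  have hxset : x ∈ ((P : Subgroup G) : Set G) * (R : Set G) := by
    rw [← coe_sup_of_mul_comm h2]; exact hx
  obtain ⟨a, ha, r, hr, rfl⟩ := hxset
  set P' : Subgroup G := conjS r (P : Subgroup G) with hP'def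
  have hP'p : IsPGroup p P' := P.isPGroup'.map _
  have hP'card : Nat.card P' = Nat.card (P : Subgroup G) :=
    (Nat.card_congr
      (Subgroup.equivMapOfInjective (P : Subgroup G) _
        ((MulAut.conj r⁻¹).injective)).toEquiv).symm
  have hperm : (((P : Subgroup G) : Set G)) * (P' : Set G)
      = (P' : Set G) * ((P : Subgroup G) : Set G) := h1 r hr
  set Q : Subgroup G := (P : Subgroup G) ⊔ P' with hQdef
  have hPQ : (P : Subgroup G) ≤ Q := le_sup_left
  have hP'Q : P' ≤ Q := le_sup_right
  let PQ : Sylow p ↥Q := P.subtype hPQ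
  have hP'Qp : IsPGroup p (P'.subgroupOf Q) := hP'p.comap_subtype
  obtain ⟨S, hS⟩ := hP'Qp.exists_le_sylow
  obtain ⟨q, hq⟩ := MulAction.exists_smul_eq ↥Q PQ S
  have key : ∀ y ∈ P', (q : G)⁻¹ * y * (q : G) ∈ (P : Subgroup G) := by
    intro y hy
    have hyQ : y ∈ Q := hP'Q hy
    have hmem : (⟨y, hyQ⟩ : ↥Q) ∈ (S : Subgroup ↥Q) :=
      hS (by simpa [Subgroup.mem_subgroupOf] using hy)
    rw [← hq, Sylow.coe_subgroup_smul,
      Subgroup.mem_pointwise_smul_iff_inv_smul_mem] at hmem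
    have hmem2 : ((q⁻¹ * ⟨y, hyQ⟩ * q : ↥Q) : G) ∈ (P : Subgroup G) := by
      simpa [PQ, Sylow.coe_subtype, Subgroup.mem_subgroupOf, mul_assoc] using hmem
    simpa [mul_assoc] using hmem2
  have hqmem : (q : G) ∈ (P' : Set G) * ((P : Subgroup G) : Set G) := by
    have hq2 : (q : G) ∈ ((P' ⊔ (P : Subgroup G) : Subgroup G) : Set G) := by
      rw [sup_comm]
      exact q.2
    rwa [coe_sup_of_mul_comm hperm.symm] at hq2
  obtain ⟨c, hc, b, hb, hcb⟩ := hqmem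
  have hP'leP : P' ≤ (P : Subgroup G) := by
    intro y hy
    have hcyc : c * y * c⁻¹ ∈ P' := P'.mul_mem (P'.mul_mem hc hy) (P'.inv_mem hc)
    have hk := key _ hcyc
    rw [← hcb] at hk
    have heq : ((c * b : G))⁻¹ * (c * y * c⁻¹) * (c * b) = b⁻¹ * y * b := by group
    rw [heq] at hk
    have hy2 := (P : Subgroup G).mul_mem
      ((P : Subgroup G).mul_mem hb hk) ((P : Subgroup G).inv_mem hb)
    have heq2 : b * (b⁻¹ * y * b) * b⁻¹ = y := by group
    rwa [heq2] at hy2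
  have hP'eq : P' = (P : Subgroup G) :=
    Subgroup.eq_of_le_of_card_ge hP'leP hP'card.ge
  have hh' : h ∈ P' := hP'eq ▸ hh
  rw [hP'def, conjS] at hh'
  obtain ⟨p1, hp1, hp1eq⟩ := Subgroup.mem_map.mp hh'
  have hxeq : a * r * h * (a * r)⁻¹ = a * p1 * a⁻¹ := by
    rw [← hp1eq]
    simp only [MulEquiv.coe_toMonoidHom, MulAut.conj_apply, inv_inv]
    group
  rw [hxeq]
  exact (P : Subgroup G).mul_mem ((P : Subgroup G).mul_mem ha hp1)
    ((P : Subgroup G).inv_mem ha)
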